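/- Let n = 2 or n = 3, let Z_1, Z_2 ∈ ℝ^n with Z_1 ≠ Z_2, and let d_1 ≥ d_2 ≥ 0. If d_1 − d_2 ≥ ‖Z_2 − Z_1‖, then the set of global minimizers of the distance-error objective O(W) = |‖W − Z_1‖ − d_1| + |‖W − Z_2‖ − d_2| is exactly the closed segment joining N_{−2} = Z_2 + d_2 (Z_2 − Z_1)/‖Z_2 − Z_1‖ and N_1 = Z_1 + d_1 (Z_2 − Z_1)/‖Z_2 − Z_1‖. -/

import Mathlib

/-- Two measurements, distance error, case (c): if `d₁ - d₂ ≥ ‖Z₂ - Z₁‖`, then the set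
of global minimizers of `O(W) = |‖W - Z₁‖ - d₁| + |‖W - Z₂‖ - d₂|` is exactly the
closed segment joining `N₋₂ = Z₂ + d₂ (Z₂ - Z₁)/‖Z₂ - Z₁‖` and
`N₁ = Z₁ + d₁ (Z₂ - Z₁)/‖Z₂ - Z₁‖`. -/
theorem two_meas_distance_error_case_c
    (n : ℕ) (hn : n = 2 ∨ n = 3)
    (Z₁ Z₂ : EuclideanSpace ℝ (Fin n)) (hZ : Z₁ ≠ Z₂)
    (d₁ d₂ : ℝ) (hd₂ : 0 ≤ d₂) (hd : d₂ ≤ d₁)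
    (O : EuclideanSpace ℝ (Fin n) → ℝ)
    (hO : ∀ W, O W = |‖W - Z₁‖ - d₁| + |‖W - Z₂‖ - d₂|)
    (hcase : ‖Z₂ - Z₁‖ ≤ d₁ - d₂) :
    {W : EuclideanSpace ℝ (Fin n) | ∀ V, O W ≤ O V}
      = segment ℝ (Z₂ + (d₂ / ‖Z₂ - Z₁‖) • (Z₂ - Z₁))
          (Z₁ + (d₁ / ‖Z₂ - Z₁‖) • (Z₂ - Z₁)) := by
  set v := Z₂ - Z₁ with hvdef
  set r := ‖v‖ with hrdef
  have hr : 0 < r := norm_pos_iff.2 (sub_ne_zero.2 (Ne.symm hZ))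
  have hr' : r ≠ 0 := hr.ne'
  have hZ₂ : Z₂ = Z₁ + v := by simp [hvdef]
  set c₁ : ℝ := (r + d₂) / r with hc₁def
  set c₂ : ℝ := d₁ / r with hc₂def
  have hc12 : c₁ ≤ c₂ := (div_le_div_iff_of_pos_right hr).2 (by linarith)
  -- endpoints as points on the line
  have hP : Z₂ + (d₂ / r) • v = Z₁ + c₁ • v := by
    rw [hZ₂, hc₁def]
    have h : (r + d₂)/r = 1 + d₂/r := by field_simp
    rw [h]; module
  -- norms of points on the line
  have key1 : ∀ c : ℝ, 0 ≤ c → ‖(Z₁ + c • v) - Z₁‖ = c * r := by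
    intro c hc
    have h : (Z₁ + c • v) - Z₁ = c • v := by abel
    rw [h, norm_smul, Real.norm_of_nonneg hc]
  have key2 : ∀ c : ℝ, 1 ≤ c → ‖(Z₁ + c • v) - Z₂‖ = (c - 1) * r := by
    intro c hc
    have h : (Z₁ + c • v) - Z₂ = (c - 1) • v := by rw [hZ₂]; module
    rw [h, norm_smul, Real.norm_of_nonneg (by linarith)]
  -- value of O on the candidate segment
  have hval : ∀ c : ℝ, c₁ ≤ c → c ≤ c₂ → O (Z₁ + c • v) = d₁ - d₂ - r := by
    intro c h1 h2
    have hc1 : r + d₂ ≤ c * r := by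
      have := (div_le_iff₀ hr).1 h1; linarith
    have hc2 : c * r ≤ d₁ := by
      have := (le_div_iff₀ hr).1 h2; linarith
    have hc0 : (0:ℝ) ≤ c := by nlinarith
    have hc1' : (1:ℝ) ≤ c := by nlinarith
    rw [hO, key1 c hc0, key2 c hc1',
      abs_of_nonpos (by linarith), abs_of_nonneg (by nlinarith)]
    ring
  -- lower bound
  have hlow : ∀ V, d₁ - d₂ - r ≤ O V := by
    intro V
    have htri : ‖V - Z₁‖ ≤ ‖V - Z₂‖ + r := by
      have := dist_triangle V Z₂ Z₁
      simpa [dist_eq_norm, hrdef, hvdef, norm_sub_rev] using this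
    rw [hO]
    have h1 : d₁ - ‖V - Z₁‖ ≤ |‖V - Z₁‖ - d₁| := by
      rw [abs_sub_comm]; exact le_abs_self _
    have h2 : ‖V - Z₂‖ - d₂ ≤ |‖V - Z₂‖ - d₂| := le_abs_self _
    linarith
  -- segment membership for points on the line
  have memseg : ∀ c : ℝ, c₁ ≤ c → c ≤ c₂ →
      (Z₁ + c • v) ∈ segment ℝ (Z₁ + c₁ • v) (Z₁ + c₂ • v) := by
    intro c h1 h2
    have hc : c ∈ segment ℝ c₁ c₂ := by
      rw [segment_eq_Icc hc12]; exact ⟨h1, h2⟩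
    obtain ⟨a, b, ha, hb, hab, habc⟩ := hc
    refine ⟨a, b, ha, hb, hab, ?_⟩
    have hA : a = 1 - b := by linarith
    subst hA
    rw [smul_eq_mul, smul_eq_mul] at habc
    rw [← habc]; module
  rw [hP]
  ext W
  simp only [Set.mem_setOf_eq]
  constructor
  · intro hW
    -- W is a minimizer, hence O W = d₁ - d₂ - r
    have hup : O W ≤ d₁ - d₂ - r := by
      have := hW (Z₁ + c₂ • v)
      rwa [hval c₂ hc12 le_rfl] at this
    have heq : O W = d₁ - d₂ - r := le_antisymm hup (hlow W)
    rw [hO] at heq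
    set a' := ‖W - Z₁‖ with ha'def
    set b' := ‖W - Z₂‖ with hb'def
    have htri : a' ≤ b' + r := by
      have := dist_triangle W Z₂ Z₁
      simpa [dist_eq_norm, hrdef, hvdef, norm_sub_rev, ha'def, hb'def] using this
    have h1 : d₁ - a' ≤ |a' - d₁| := by rw [abs_sub_comm]; exact le_abs_self _
    have h2 : b' - d₂ ≤ |b' - d₂| := le_abs_self _
    have h1' : a' - d₁ ≤ |a' - d₁| := le_abs_self _
    have h2' : d₂ - b' ≤ |b' - d₂| := by rw [abs_sub_comm]; exact le_abs_self _
    -- tightness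
    have hab' : a' = b' + r := by linarith
    have ha1 : |a' - d₁| = d₁ - a' := by linarith
    have hb1 : |b' - d₂| = b' - d₂ := by linarith
    have had : a' ≤ d₁ := by
      have := abs_nonneg (a' - d₁); linarith
    have hbd : d₂ ≤ b' := by
      have := abs_nonneg (b' - d₂); linarith
    -- triangle equality ⇒ Z₂ between Z₁ and W
    have hwbtw : Wbtw ℝ Z₁ Z₂ W := by
      rw [← dist_add_dist_eq_iff]
      rw [dist_eq_norm, dist_eq_norm, dist_eq_norm, norm_sub_rev Z₁ Z₂,
        norm_sub_rev Z₂ W, norm_sub_rev Z₁ W]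
      rw [← hvdef, ← hrdef, ← ha'def, ← hb'def]
      linarith
    obtain ⟨s, t, hs, ht, hst, hseg⟩ := hwbtw.mem_segment
    have hv' : t • (W - Z₁) = v := by
      rw [hvdef, ← hseg]
      have hS : s = 1 - t := by linarith
      subst hS; module
    have ht' : 0 < t := by
      rcases ht.lt_or_eq with h | h
      · exact h
      · exfalso
        rw [← h, zero_smul] at hv'
        rw [hrdef, ← hv', norm_zero] at hr
        exact hr.false
    have ht0 : t ≠ 0 := ht'.ne'
    have hWline : W = Z₁ + (1/t) • v := by
      rw [← hv', smul_smul]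
      field_simp
      rw [one_smul]; abel
    -- locate the parameter
    have hc0 : (0:ℝ) ≤ 1/t := by positivity
    have hnorm : a' = (1/t) * r := by
      rw [ha'def, hWline] at *
      exact key1 (1/t) hc0
    have hrt : a' * t = r := by
      rw [hnorm]; field_simp
    have hcl : c₁ ≤ 1/t := by
      rw [hc₁def, div_le_div_iff₀ hr ht']
      have := mul_le_mul_of_nonneg_right (show r + d₂ ≤ a' by linarith) ht'.le
      linarith
    have hcr : 1/t ≤ c₂ := by
      rw [hc₂def, div_le_div_iff₀ ht' hr]
      have := mul_le_mul_of_nonneg_right had ht'.le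
      linarith
    rw [hWline]
    exact memseg _ hcl hcr
  · intro hW V
    obtain ⟨a, b, ha, hb, hab, hseg⟩ := hW
    have hWline : W = Z₁ + (a * c₁ + b * c₂) • v := by
      rw [← hseg]
      have hA : a = 1 - b := by linarith
      subst hA; module
    have h1 : c₁ ≤ a * c₁ + b * c₂ := by
      have he : a * c₁ + b * c₂ = c₁ + b * (c₂ - c₁) := by
        have hA : a = 1 - b := by linarith
        rw [hA]; ring
      have := mul_nonneg hb (sub_nonneg.2 hc12)
      linarith
    have h2 : a * c₁ + b * c₂ ≤ c₂ := by
      have he : a * c₁ + b * c₂ = c₂ - a * (c₂ - c₁) := by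
        have hB : b = 1 - a := by linarith
        rw [hB]; ring
      have := mul_nonneg ha (sub_nonneg.2 hc12)
      linarith
    rw [hWline, hval _ h1 h2]
    exact hlow V
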